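/- arXiv:2107.08678 — 4 statements merged into one kernel-verified Lean document; each statement's English description precedes it below -/
import Mathlib

section
/- Let a and q be nonzero complex numbers such that q^{2k} ≠ 1 for every integer k with 1 ≤ k ≤ n. Then for every integer n ≥ 0, a^{2n} q^{2n(n-1)} = Σ_{i=0}^{n} a^{i} q^{i(i-1)/2} · [n choose i]_q · {n+i-2; a}_i. -/
open Finset

/-- The balanced q-bracket `{n} = q^n - q^(-n)`. -/
noncomputable def qbr (q : ℂ) (n : ℤ) : ℂ := q ^ n - q ^ (-n)

/-- The two-variable bracket `{n; a} = a q^n - a⁻¹ q^(-n)`. -/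
noncomputable def qbrA (a q : ℂ) (n : ℤ) : ℂ := a * q ^ n - a⁻¹ * q ^ (-n)

/-- Descending product `{n}_i = {n}{n-1}⋯{n-i+1}` (equal to 1 when `i = 0`). -/
noncomputable def qbrP (q : ℂ) (n : ℤ) (i : ℕ) : ℂ := ∏ k ∈ Finset.range i, qbr q (n - k)

/-- Descending product `{n; a}_i = {n; a}{n-1; a}⋯{n-i+1; a}` (equal to 1 when `i = 0`). -/
noncomputable def qbrAP (a q : ℂ) (n : ℤ) (i : ℕ) : ℂ := ∏ k ∈ Finset.range i, qbrA a q (n - k)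

/-- Ascending product `{n; a}{n+1; a}⋯{n+i-1; a}` (used for `{-n; a}_i`, equal to 1 when `i = 0`). -/
noncomputable def qbrAPasc (a q : ℂ) (n : ℤ) (i : ℕ) : ℂ := ∏ k ∈ Finset.range i, qbrA a q (n + k)

/-- The factorial `{n}! = {n}_n`. -/
noncomputable def qfac (q : ℂ) (n : ℕ) : ℂ := qbrP q n n

/-- The balanced q-binomial coefficient `[n choose i] = {n}!/({i}!{n-i}!)`. -/
noncomputable def qbinom (q : ℂ) (n i : ℕ) : ℂ := qfac q n / (qfac q i * qfac q (n - i))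

/-! ### Auxiliary machinery: Gaussian binomials -/

/-- Gaussian binomial coefficient in base `s` (Pascal recursion; polynomial in `s`). -/
noncomputable def gb (s : ℂ) : ℕ → ℕ → ℂ
  | _, 0 => 1
  | 0, _+1 => 0
  | n+1, i+1 => gb s n i + s^(i+1) * gb s n (i+1)

/-- The product `∏_{j<i} (x - s^j)`. -/
noncomputable def Pp (s x : ℂ) (i : ℕ) : ℂ := ∏ j ∈ range i, (x - s^j)

/-- The product `∏_{k<m} (s^{k+1} - 1)`. -/
noncomputable def Ff (s : ℂ) (m : ℕ) : ℂ := ∏ k ∈ range m, (s^(k+1) - 1)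

lemma gb_zero (s : ℂ) (n : ℕ) : gb s n 0 = 1 := by cases n <;> rfl

lemma gb_of_lt (s : ℂ) : ∀ n i : ℕ, n < i → gb s n i = 0 := by
  intro n
  induction n with
  | zero => intro i hi; match i, hi with | (i+1), _ => rfl
  | succ n ih =>
    intro i hi
    match i, hi with
    | (i+1), hi =>
      show gb s n i + s^(i+1) * gb s n (i+1) = 0
      rw [ih i (by omega), ih (i+1) (by omega)]; ring

lemma gb_diag (s : ℂ) : ∀ n : ℕ, gb s n n = 1 := by
  intro n
  induction n with
  | zero => rfl
  | succ n ih =>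
    show gb s n n + s^(n+1) * gb s n (n+1) = 1
    rw [ih, gb_of_lt s n (n+1) (by omega)]; ring

/-- The q-analogue of `x^n = Σ C(n,i) (x-1)^i`. -/
lemma core_identity (s x : ℂ) : ∀ n : ℕ, x ^ n = ∑ i ∈ range (n+1), gb s n i * Pp s x i := by
  intro n
  induction n with
  | zero => simp [gb, Pp]
  | succ n ih =>
    have h1 : x ^ (n+1) = ∑ i ∈ range (n+1), gb s n i * (Pp s x (i+1) + s^i * Pp s x i) := by
      rw [pow_succ, ih, Finset.sum_mul]
      refine Finset.sum_congr rfl fun i _ => ?_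
      have : Pp s x (i+1) = Pp s x i * (x - s^i) := by
        rw [Pp, Finset.prod_range_succ]; rfl
      rw [this]; ring
    rw [h1]
    have h2 : ∑ i ∈ range (n+1), gb s n i * (Pp s x (i+1) + s^i * Pp s x i)
        = (∑ i ∈ range (n+1), gb s n i * Pp s x (i+1))
          + ∑ i ∈ range (n+1), s^i * gb s n i * Pp s x i := by
      rw [← Finset.sum_add_distrib]
      refine Finset.sum_congr rfl fun i _ => ?_; ring
    rw [h2]
    rw [Finset.sum_range_succ' (fun i => gb s (n+1) i * Pp s x i)]
    have hRHS : ∀ i, gb s (n+1) (i+1) * Pp s x (i+1)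
        = gb s n i * Pp s x (i+1) + s^(i+1) * gb s n (i+1) * Pp s x (i+1) := by
      intro i
      show (gb s n i + s^(i+1) * gb s n (i+1)) * Pp s x (i+1) = _
      ring
    simp only [hRHS]
    rw [Finset.sum_add_distrib]
    have h3 : ∑ i ∈ range (n+1), s^i * gb s n i * Pp s x i
        = (∑ i ∈ range n, s^(i+1) * gb s n (i+1) * Pp s x (i+1)) + 1 * 1 := by
      rw [Finset.sum_range_succ' (fun i => s^i * gb s n i * Pp s x i)]
      simp [gb_zero, Pp]
    have h4 : ∑ i ∈ range (n+1), s^(i+1) * gb s n (i+1) * Pp s x (i+1)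
        = ∑ i ∈ range n, s^(i+1) * gb s n (i+1) * Pp s x (i+1) := by
      rw [Finset.sum_range_succ, gb_of_lt s n (n+1) (by omega)]; ring
    have h5 : gb s (n+1) 0 * Pp s x 0 = 1 * 1 := by
      simp [gb_zero, Pp]
    rw [h3, h4, h5]; ring

lemma Ff_succ (s : ℂ) (m : ℕ) : Ff s (m+1) = Ff s m * (s^(m+1) - 1) := by
  rw [Ff, Finset.prod_range_succ]; rfl

lemma Ff_zero (s : ℂ) : Ff s 0 = 1 := by simp [Ff]

lemma gb_mul_Ff (s : ℂ) : ∀ n i : ℕ, i ≤ n →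
    gb s n i * (Ff s i * Ff s (n - i)) = Ff s n := by
  intro n
  induction n with
  | zero => intro i hi; interval_cases i; simp [gb_zero, Ff_zero]
  | succ n ih =>
    intro i hi
    match i with
    | 0 => rw [gb_zero, Ff_zero, Nat.sub_zero, one_mul, one_mul]
    | (i+1) =>
      show (gb s n i + s^(i+1) * gb s n (i+1)) * (Ff s (i+1) * Ff s (n+1-(i+1))) = Ff s (n+1)
      have hin : i ≤ n := by omega
      rcases eq_or_lt_of_le hin with h | h
      · subst h
        rw [gb_of_lt s i (i+1) (by omega), gb_diag,
          (by omega : i + 1 - (i + 1) = 0), Ff_zero]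
        ring
      · have e1 : gb s n i * (Ff s i * Ff s (n - i)) = Ff s n := ih i hin
        have e2 : gb s n (i+1) * (Ff s (i+1) * Ff s (n - (i+1))) = Ff s n := ih (i+1) (by omega)
        have hs1 : Ff s (i+1) = Ff s i * (s^(i+1) - 1) := Ff_succ s i
        have hs2 : Ff s (n - i) = Ff s (n - (i+1)) * (s^(n-i) - 1) := by
          have h' : n - i = (n - (i+1)) + 1 := by omega
          rw [h', Ff_succ, ← h']
        have hs3 : Ff s (n+1) = Ff s n * (s^(n+1) - 1) := Ff_succ s n
        have hn1 : n + 1 - (i+1) = n - i := by omega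
        rw [hn1, hs3]
        have key : s^(i+1) - 1 + s^(i+1) * (s^(n-i) - 1) = s^(n+1) - 1 := by
          have hp : s^(i+1) * s^(n-i) = s^(n+1) := by
            rw [← pow_add]; congr 1; omega
          rw [mul_sub, hp]; ring
        calc (gb s n i + s^(i+1) * gb s n (i+1)) * (Ff s (i+1) * Ff s (n-i))
            = gb s n i * (Ff s i * Ff s (n-i)) * (s^(i+1)-1)
              + s^(i+1) * (gb s n (i+1) * (Ff s (i+1) * Ff s (n-(i+1)))) * (s^(n-i)-1) := by
              rw [hs1, hs2]; ring
          _ = Ff s n * (s^(i+1)-1) + s^(i+1) * Ff s n * (s^(n-i)-1) := by rw [e1, e2]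
          _ = Ff s n * (s^(i+1) - 1 + s^(i+1) * (s^(n-i) - 1)) := by ring
          _ = Ff s n * (s^(n+1)-1) := by rw [key]

/-! ### Bridge lemmas -/

lemma prod_zpow' (q : ℂ) (hq : q ≠ 0) (f : ℕ → ℤ) (i : ℕ) :
    ∏ j ∈ range i, q ^ f j = q ^ (∑ j ∈ range i, f j) := by
  induction i with
  | zero => simp
  | succ i ih => rw [Finset.prod_range_succ, Finset.sum_range_succ, ih, zpow_add₀ hq]

lemma qfac_eq (q : ℂ) (hq : q ≠ 0) (n : ℕ) :
    qfac q n = (-1)^n * q^(∑ k ∈ range n, (k+1)) * Ff ((q^2)⁻¹) n := by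
  have step1 : qfac q n = ∏ k ∈ range n, qbr q ((k:ℤ)+1) := by
    rw [qfac, qbrP]
    rw [← Finset.prod_range_reflect (fun j => qbr q ((j:ℤ)+1)) n]
    refine Finset.prod_congr rfl fun k hk => ?_
    have hk' : k < n := Finset.mem_range.mp hk
    congr 1
    push_cast
    omega
  rw [step1]
  have step2 : ∀ k : ℕ, qbr q ((k:ℤ)+1) = (-1) * q^(k+1) * (((q^2)⁻¹)^(k+1) - 1) := by
    intro k
    have e1 : (q:ℂ) ^ ((k:ℤ)+1) = q^(k+1) := by
      rw [(by push_cast; ring : (k:ℤ)+1 = ((k+1 : ℕ) : ℤ)), zpow_natCast]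
    have e2 : (q:ℂ) ^ (-((k:ℤ)+1)) = (q^(k+1))⁻¹ := by
      rw [(by push_cast; ring : (k:ℤ)+1 = ((k+1 : ℕ) : ℤ)), zpow_neg, zpow_natCast]
    rw [qbr, e1, e2]
    have hqk : (q:ℂ)^(k+1) ≠ 0 := pow_ne_zero _ hq
    rw [inv_pow, ← pow_mul]
    field_simp
    ring
  rw [Finset.prod_congr rfl (fun k _ => step2 k), Finset.prod_mul_distrib,
    Finset.prod_mul_distrib]
  rw [Finset.prod_const, Finset.card_range, Finset.prod_pow_eq_pow_sum]
  rfl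

lemma Ff_ne_zero (q : ℂ) (hq : q ≠ 0) (n m : ℕ) (hm : m ≤ n)
    (hroot : ∀ k : ℕ, 1 ≤ k → k ≤ n → q ^ (2 * k) ≠ 1) :
    Ff ((q^2)⁻¹) m ≠ 0 := by
  rw [Ff]
  apply Finset.prod_ne_zero_iff.mpr
  intro k hk
  have hk' : k < m := Finset.mem_range.mp hk
  intro hzero
  have h1 : ((q^2)⁻¹)^(k+1) = 1 := by linear_combination hzero
  have h2 : ((q^2)⁻¹ : ℂ)^(k+1) = (q ^ (2*(k+1)))⁻¹ := by
    rw [inv_pow, ← pow_mul]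
  rw [h2, inv_eq_one] at h1
  exact hroot (k+1) (by omega) (by omega) h1

lemma sum_range_add_one_eq (n : ℕ) : (∑ k ∈ range n, (k+1)) * 2 = n * (n+1) := by
  induction n with
  | zero => simp
  | succ n ih => rw [Finset.sum_range_succ, add_mul, ih]; ring

lemma qbinom_eq (q : ℂ) (hq : q ≠ 0) (n i : ℕ) (hi : i ≤ n)
    (hroot : ∀ k : ℕ, 1 ≤ k → k ≤ n → q ^ (2 * k) ≠ 1) :
    qbinom q n i = q^(i*(n-i)) * gb ((q^2)⁻¹) n i := by
  obtain ⟨m, rfl⟩ : ∃ m, n = i + m := ⟨n - i, by omega⟩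
  rw [show i + m - i = m from Nat.add_sub_cancel_left i m]
  set s := ((q:ℂ)^2)⁻¹ with hs
  have hFi : Ff s i ≠ 0 := Ff_ne_zero q hq (i+m) i hi hroot
  have hFni : Ff s m ≠ 0 := Ff_ne_zero q hq (i+m) m (by omega) hroot
  have hgb := gb_mul_Ff s (i+m) i hi
  rw [show i + m - i = m from Nat.add_sub_cancel_left i m] at hgb
  rw [qbinom, qfac_eq q hq (i+m), qfac_eq q hq i,
    show i + m - i = m from Nat.add_sub_cancel_left i m, qfac_eq q hq m]
  have hsign : ((-1:ℂ))^(i+m) = (-1)^i * (-1)^m := by rw [pow_add]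
  have hpow : (q:ℂ)^(∑ k ∈ range (i+m), (k+1))
      = q^(∑ k ∈ range i, (k+1)) * q^(∑ k ∈ range m, (k+1)) * q^(i*m) := by
    rw [← pow_add, ← pow_add]
    congr 1
    apply Nat.eq_of_mul_eq_mul_right (show 0 < 2 by norm_num)
    have g1 := sum_range_add_one_eq (i+m)
    have g2 := sum_range_add_one_eq i
    have g3 := sum_range_add_one_eq m
    zify at g1 g2 g3 ⊢
    linear_combination g1 - g2 - g3
  rw [hsign, hpow, ← hgb]
  have hq1 : (q:ℂ)^(∑ k ∈ range i, (k+1)) ≠ 0 := pow_ne_zero _ hq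
  have hq2 : (q:ℂ)^(∑ k ∈ range m, (k+1)) ≠ 0 := pow_ne_zero _ hq
  have hm1 : ((-1:ℂ))^i ≠ 0 := pow_ne_zero _ (by norm_num)
  have hm2 : ((-1:ℂ))^m ≠ 0 := pow_ne_zero _ (by norm_num)
  have hden : ((-1:ℂ))^i * q^(∑ k ∈ range i, (k+1)) * Ff s i
      * ((-1:ℂ)^m * q^(∑ k ∈ range m, (k+1)) * Ff s m) ≠ 0 := by
    exact mul_ne_zero (mul_ne_zero (mul_ne_zero hm1 hq1) hFi)
      (mul_ne_zero (mul_ne_zero hm2 hq2) hFni)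
  rw [div_eq_iff hden]
  ring

lemma sum_range_id_two : ∀ i : ℕ, (∑ j ∈ range i, j) * 2 = i * (i-1)
  | 0 => by simp
  | (m+1) => by
    rw [Finset.sum_range_succ, add_mul, sum_range_id_two m]
    cases m with
    | zero => simp
    | succ k =>
      simp only [Nat.add_sub_cancel]
      ring

lemma qbrA_factor (a q : ℂ) (ha : a ≠ 0) (hq : q ≠ 0) (n : ℕ) (j : ℕ) :
    qbrA a q ((n:ℤ) - 1 + j)
      = a⁻¹ * q^((j:ℤ) - ((n:ℤ) - 1)) * (a^2 * q^(2*((n:ℤ)-1)) - ((q^2)⁻¹)^j) := by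
  have hsj : ((q^2)⁻¹ : ℂ)^j = q ^ (-(2*(j:ℤ))) := by
    rw [← zpow_natCast ((q^2)⁻¹ : ℂ) j, ← zpow_neg_one, ← zpow_natCast q 2, ← zpow_mul, ← zpow_mul]
    congr 1
    push_cast
    ring
  rw [qbrA, hsj]
  have e1 : (q:ℂ) ^ ((j:ℤ)-((n:ℤ)-1)) * q^(2*((n:ℤ)-1)) = q ^ ((n:ℤ)-1+j) := by
    rw [← zpow_add₀ hq]
    congr 1
    ring
  have e2 : (q:ℂ) ^ ((j:ℤ)-((n:ℤ)-1)) * q^(-(2*(j:ℤ))) = q^(-((n:ℤ)-1+j)) := by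
    rw [← zpow_add₀ hq]
    congr 1
    ring
  have ha2 : a⁻¹ * a^2 = a := by
    field_simp
  linear_combination (-a⁻¹*a^2) * e1 + a⁻¹ * e2 + (-(q^((n:ℤ)-1+(j:ℤ)))) * ha2

lemma qbrAP_eq (a q : ℂ) (ha : a ≠ 0) (hq : q ≠ 0) (n i : ℕ) :
    qbrAP a q ((n : ℤ) + (i : ℤ) - 2) i
      = a⁻¹^i * q^(∑ j ∈ range i, ((j:ℤ) - ((n:ℤ)-1)))
          * Pp ((q^2)⁻¹) (a^2 * q^(2*((n:ℤ)-1))) i := by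
  have step1 : qbrAP a q ((n : ℤ) + (i : ℤ) - 2) i
      = ∏ j ∈ range i, qbrA a q ((n:ℤ) - 1 + j) := by
    rw [qbrAP, ← Finset.prod_range_reflect (fun j => qbrA a q ((n:ℤ) - 1 + j)) i]
    refine Finset.prod_congr rfl fun k hk => ?_
    have hk' : k < i := Finset.mem_range.mp hk
    congr 1
    push_cast
    omega
  rw [step1, Finset.prod_congr rfl (fun j _ => qbrA_factor a q ha hq n j),
    Finset.prod_mul_distrib, Finset.prod_mul_distrib, Finset.prod_const, Finset.card_range,
    prod_zpow' q hq]
  rfl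

theorem statement_0 (a q : ℂ) (ha : a ≠ 0) (hq : q ≠ 0) (n : ℕ)
    (hroot : ∀ k : ℕ, 1 ≤ k → k ≤ n → q ^ (2 * k) ≠ 1) :
    a ^ (2 * n) * q ^ (2 * n * (n - 1)) =
      ∑ i ∈ Finset.range (n + 1),
        a ^ i * q ^ (i * (i - 1) / 2) * qbinom q n i *
          qbrAP a q ((n : ℤ) + (i : ℤ) - 2) i := by
  set s := ((q:ℂ)^2)⁻¹ with hs
  set x := a^2 * (q:ℂ)^(2*((n:ℤ)-1)) with hx
  have hterm : ∀ i ∈ range (n+1),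
      a ^ i * q ^ (i * (i - 1) / 2) * qbinom q n i * qbrAP a q ((n : ℤ) + (i : ℤ) - 2) i
        = gb s n i * Pp s x i := by
    intro i hi
    have hin : i ≤ n := by have := Finset.mem_range.mp hi; omega
    rw [qbinom_eq q hq n i hin hroot, qbrAP_eq a q ha hq n i]
    have haa : a ^ i * a⁻¹^i = 1 := by
      rw [← mul_pow, mul_inv_cancel₀ ha, one_pow]
    have hqq : (q:ℂ) ^ (i * (i - 1) / 2) * q^(i*(n-i)) * q^(∑ j ∈ range i, ((j:ℤ) - ((n:ℤ)-1))) = 1 := by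
      rw [← zpow_natCast q (i * (i - 1) / 2), ← zpow_natCast q (i*(n-i)), ← zpow_add₀ hq, ← zpow_add₀ hq]
      rw [(by norm_num : (1:ℂ) = q ^ (0:ℤ))]
      congr 1
      have e0 : i*(i-1)/2 = ∑ j ∈ range i, j := by
        have := sum_range_id_two i; omega
      have hsum : (∑ j ∈ range i, ((j:ℤ) - ((n:ℤ)-1))) = (∑ j ∈ range i, (j:ℤ)) - i * ((n:ℤ)-1) := by
        rw [Finset.sum_sub_distrib, Finset.sum_const, Finset.card_range, nsmul_eq_mul]
      have hcast : (∑ j ∈ range i, (j:ℤ)) = ((∑ j ∈ range i, j : ℕ) : ℤ) := by push_cast; rfl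
      rw [e0, hsum, hcast]
      rcases i with _ | k
      · simp
      · have hkn : k + 1 ≤ n := hin
        have hS2 : (∑ j ∈ range (k+1), (j:ℤ)) * 2 = ((k:ℤ)+1) * k := by
          rw [hcast]
          have h := sum_range_id_two (k+1)
          simp only [Nat.add_sub_cancel] at h
          exact_mod_cast h
        push_cast [Nat.cast_sub hkn]
        linear_combination hS2
    calc a ^ i * q ^ (i * (i - 1) / 2) * (q^(i*(n-i)) * gb s n i)
          * (a⁻¹^i * q^(∑ j ∈ range i, ((j:ℤ) - ((n:ℤ)-1))) * Pp s x i)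
        = (a ^ i * a⁻¹^i) * ((q:ℂ) ^ (i * (i - 1) / 2) * q^(i*(n-i)) * q^(∑ j ∈ range i, ((j:ℤ) - ((n:ℤ)-1))))
            * (gb s n i * Pp s x i) := by ring
      _ = gb s n i * Pp s x i := by rw [haa, hqq]; ring
  rw [Finset.sum_congr rfl hterm, ← core_identity s x n]
  rw [hx, mul_pow, ← pow_mul]
  congr 1
  rcases Nat.eq_zero_or_pos n with h | h
  · subst h; norm_num
  · rw [← zpow_natCast ((q:ℂ)^(2*((n:ℤ)-1))) n, ← zpow_mul, ← zpow_natCast q (2*n*(n-1))]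
    congr 1
    push_cast [Nat.cast_sub (by omega : 1 ≤ n)]
    ring
end

section
/- Let n ≥ 0 be an integer and a, q nonzero complex numbers with q^{2k} ≠ 1 for 1 ≤ k ≤ n. For integers 0 ≤ j ≤ i ≤ n define κ_{i,j} = 2n(n−1) − n(i+j) − i(i−3)/2 + j(j+1)/2 and λ_{i,j} = a^{2n−i−j} q^{κ_{i,j}} · [i choose j]_q · {n+i−j−2; a}_{i−j}. Then for every integer i with 0 ≤ i ≤ n, a^{2n} q^{2n(n−1)} = Σ_{j=0}^{i} λ_{i,j}. -/
open Finset

/-- The exponent `κ_{i,j} = 2n(n−1) − n(i+j) − i(i−3)/2 + j(j+1)/2`. -/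
def kap (n i j : ℕ) : ℤ :=
  2 * (n : ℤ) * ((n : ℤ) - 1) - (n : ℤ) * ((i : ℤ) + (j : ℤ))
    - (i : ℤ) * ((i : ℤ) - 3) / 2 + (j : ℤ) * ((j : ℤ) + 1) / 2

/-- The entry `λ_{i,j} = a^{2n−i−j} q^{κ_{i,j}} [i choose j]_q {n+i−j−2; a}_{i−j}`. -/
noncomputable def lamE (a q : ℂ) (n i j : ℕ) : ℂ :=
  a ^ (2 * (n : ℤ) - (i : ℤ) - (j : ℤ)) * q ^ (kap n i j) * qbinom q i j *
    qbrAP a q ((n : ℤ) + (i : ℤ) - (j : ℤ) - 2) (i - j)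


/- ---------------- auxiliary lemmas ---------------- -/

lemma qfac_zero (q : ℂ) : qfac q 0 = 1 := by simp [qfac, qbrP]

lemma qfac_succ (q : ℂ) (m : ℕ) : qfac q (m+1) = qbr q ((m:ℤ)+1) * qfac q m := by
  unfold qfac qbrP
  rw [Finset.prod_range_succ']
  rw [mul_comm]
  have h1 : qbr q ((↑(m+1):ℤ) - ((0:ℕ):ℤ)) = qbr q ((m:ℤ)+1) := by norm_num
  have h2 : ∀ k ∈ Finset.range m, qbr q ((↑(m+1):ℤ) - ((k+1 : ℕ):ℤ)) = qbr q ((m:ℤ) - (k:ℤ)) := by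
    intro k _; congr 1; push_cast; ring
  rw [Finset.prod_congr rfl h2, h1]

lemma qbrAP_succ (a q : ℂ) (m : ℤ) (s : ℕ) :
    qbrAP a q m (s+1) = qbrA a q m * qbrAP a q (m-1) s := by
  unfold qbrAP
  rw [Finset.prod_range_succ']
  rw [mul_comm]
  have h1 : qbrA a q (m - ((0:ℕ):ℤ)) = qbrA a q m := by norm_num
  have h2 : ∀ k ∈ Finset.range s, qbrA a q (m - ((k+1 : ℕ):ℤ)) = qbrA a q (m - 1 - (k:ℤ)) := by
    intro k _; congr 1; push_cast; ring
  rw [Finset.prod_congr rfl h2, h1]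

lemma qbrAP_zero (a q : ℂ) (m : ℤ) : qbrAP a q m 0 = 1 := by simp [qbrAP]

lemma qbr_ne (q : ℂ) (hq : q ≠ 0) (k : ℕ) (h : q^(2*k) ≠ 1) : qbr q (k:ℤ) ≠ 0 := by
  have e : qbr q (k:ℤ) = q^(-(k:ℤ)) * (q^(2*k) - 1) := by
    unfold qbr
    rw [mul_sub, ← zpow_natCast q (2*k), ← zpow_add₀ hq, mul_one]
    congr 2
    push_cast; ring
  rw [e]
  exact mul_ne_zero (zpow_ne_zero _ hq) (sub_ne_zero.mpr h)

lemma qfac_ne (q : ℂ) (hq : q ≠ 0) (m : ℕ)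
    (h : ∀ k : ℕ, 1 ≤ k → k ≤ m → q ^ (2 * k) ≠ 1) : qfac q m ≠ 0 := by
  unfold qfac qbrP
  rw [Finset.prod_ne_zero_iff]
  intro k hk
  rw [Finset.mem_range] at hk
  have e : ((m:ℤ) - (k:ℤ)) = ((m - k : ℕ) : ℤ) := by rw [Nat.cast_sub hk.le]
  rw [e]
  exact qbr_ne q hq (m-k) (h (m-k) (by omega) (by omega))

lemma qbinom_self (q : ℂ) (m : ℕ) (hf : qfac q m ≠ 0) : qbinom q m m = 1 := by
  unfold qbinom
  rw [Nat.sub_self, qfac_zero, mul_one, div_self hf]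

lemma qbinom_zero (q : ℂ) (m : ℕ) (hf : qfac q m ≠ 0) : qbinom q m 0 = 1 := by
  unfold qbinom
  rw [Nat.sub_zero, qfac_zero, one_mul, div_self hf]

lemma idiv_shift (x k : ℤ) : (x + k * 2) / 2 = x / 2 + k := by
  rw [Int.add_mul_ediv_right _ _ (by norm_num : (2:ℤ) ≠ 0)]

lemma kap_i (n i j : ℕ) : kap n (i+1) j = kap n i j - (n:ℤ) - (i:ℤ) + 1 := by
  unfold kap
  have h : ((i+1:ℕ):ℤ) * (((i+1:ℕ):ℤ) - 3) = (i:ℤ)*((i:ℤ)-3) + ((i:ℤ)-1) * 2 := by push_cast; ring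
  rw [h, idiv_shift]
  push_cast; ring

lemma kap_j (n i j : ℕ) : kap n i (j+1) = kap n i j - (n:ℤ) + (j:ℤ) + 1 := by
  unfold kap
  have h : ((j+1:ℕ):ℤ) * (((j+1:ℕ):ℤ) + 1) = (j:ℤ)*((j:ℤ)+1) + ((j:ℤ)+1) * 2 := by push_cast; ring
  rw [h, idiv_shift]
  push_cast; ring

lemma kap_00 (n : ℕ) : ((2 * n * (n - 1) : ℕ) : ℤ) = kap n 0 0 := by
  unfold kap
  cases n with
  | zero => norm_num
  | succ m => push_cast [Nat.succ_sub_one]; ring_nf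

lemma pascal (q : ℂ) (hq : q ≠ 0) (j d : ℕ)
    (hfj : qfac q (j+1) ≠ 0) (hfd : qfac q (d+1) ≠ 0) :
    qbinom q (j+d+2) (j+1)
      = q^(j+1) * qbinom q (j+d+1) (j+1) + (q^(d+1))⁻¹ * qbinom q (j+d+1) j := by
  unfold qbinom
  rw [show j+d+2-(j+1) = d+1 by omega, show j+d+1-(j+1) = d by omega,
      show j+d+1-j = d+1 by omega]
  rw [show j+d+2 = (j+d+1)+1 by omega, qfac_succ q (j+d+1), qfac_succ q j, qfac_succ q d]
  rw [qfac_succ q j] at hfj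
  rw [qfac_succ q d] at hfd
  have hbj : qbr q ((j:ℤ)+1) ≠ 0 := fun h => hfj (by rw [h]; ring)
  have hFj : qfac q j ≠ 0 := fun h => hfj (by rw [h]; ring)
  have hbd : qbr q ((d:ℤ)+1) ≠ 0 := fun h => hfd (by rw [h]; ring)
  have hFd : qfac q d ≠ 0 := fun h => hfd (by rw [h]; ring)
  have hb : ∀ m : ℤ, qbr q m = q^m - (q^m)⁻¹ := by
    intro m; unfold qbr; rw [zpow_neg]
  field_simp
  rw [hb, hb, hb]
  have e1 : (q:ℂ)^((j:ℤ)+(d:ℤ)+1+1) = q^(j+1) * q^(d+1) := by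
    rw [← zpow_natCast q (j+1), ← zpow_natCast q (d+1), ← zpow_add₀ hq]
    congr 1; push_cast; ring
  have e2 : (q:ℂ)^((j:ℤ)+1) = q^(j+1) := by
    norm_cast
  have e3 : (q:ℂ)^((d:ℤ)+1) = q^(d+1) := by
    norm_cast
  rw [show ((j+d+1:ℕ):ℤ)+1 = ((j:ℤ)+1)+((d:ℤ)+1) by push_cast; ring, zpow_add₀ hq ((j:ℤ)+1) ((d:ℤ)+1), e2, e3]
  field_simp
  ring

/- ---------------- monomial helpers ---------------- -/

lemma flat2 (a q : ℂ) (ha : a ≠ 0) (hq : q ≠ 0) (s t u v : ℤ) :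
    a^s * q^t * (a^u * q^v) = a^(s+u) * q^(t+v) := by
  rw [mul_mul_mul_comm, ← zpow_add₀ ha, ← zpow_add₀ hq]

lemma flat1 (a q : ℂ) (ha : a ≠ 0) (hq : q ≠ 0) (s t u v w : ℤ) :
    a^s * q^t * q^u * (a^v * q^w) = a^(s+v) * q^(t+u+w) := by
  rw [mul_assoc (a^s) (q^t) (q^u), ← zpow_add₀ hq t u, flat2 a q ha hq]

lemma inv2a (a : ℂ) : (a⁻¹)^2 = a^(-2:ℤ) := by
  rw [inv_pow, ← zpow_natCast a 2, ← zpow_neg]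
  congr 1

lemma inv2q (q : ℂ) (E : ℤ) : ((q^E)⁻¹)^2 = q^(-(2*E)) := by
  rw [inv_pow, ← zpow_natCast (q^E) 2, ← zpow_neg, ← zpow_mul]
  congr 1; push_cast; ring

lemma flat3 (a q : ℂ) (ha : a ≠ 0) (hq : q ≠ 0) (M u v : ℤ) :
    (a⁻¹)^2 * ((q^M)⁻¹)^2 * (a^u * q^v) = a^(-2+u) * q^(-(2*M)+v) := by
  rw [inv2a, inv2q, flat2 a q ha hq]

lemma flatA (a q : ℂ) (ha : a ≠ 0) (hq : q ≠ 0) (s t u w : ℤ) :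
    a^s * q^t * q^u * (a * q^w) = a^(s+1) * q^(t+u+w) := by
  rw [show (a:ℂ) * q^w = a^(1:ℤ) * q^w by rw [zpow_one], flat1 a q ha hq]

lemma flatAi (a q : ℂ) (ha : a ≠ 0) (hq : q ≠ 0) (s t u w : ℤ) :
    a^s * q^t * q^u * (a⁻¹ * q^w) = a^(s+(-1)) * q^(t+u+w) := by
  rw [show (a:ℂ)⁻¹ * q^w = a^(-1:ℤ) * q^w by rw [zpow_neg_one], flat1 a q ha hq]

lemma flatA2 (a q : ℂ) (ha : a ≠ 0) (hq : q ≠ 0) (s t w : ℤ) :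
    a^s * q^t * (a * q^w) = a^(s+1) * q^(t+w) := by
  rw [show (a:ℂ) * q^w = a^(1:ℤ) * q^w by rw [zpow_one], flat2 a q ha hq]

lemma flatAi2 (a q : ℂ) (ha : a ≠ 0) (hq : q ≠ 0) (s t w : ℤ) :
    a^s * q^t * (a⁻¹ * q^w) = a^(s+(-1)) * q^(t+w) := by
  rw [show (a:ℂ)⁻¹ * q^w = a^(-1:ℤ) * q^w by rw [zpow_neg_one], flat2 a q ha hq]

lemma qJ (q : ℂ) (j : ℕ) : (q:ℂ)^(j+1) = q^((j:ℤ)+1) := by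
  norm_cast

lemma qJinv (q : ℂ) (d : ℕ) : ((q:ℂ)^(d+1))⁻¹ = q^(-((d:ℤ)+1)) := by
  rw [← zpow_natCast q (d+1), ← zpow_neg]; congr 1
lemma stepB (a q : ℂ) (ha : a ≠ 0) (hq : q ≠ 0) (n j d : ℕ)
    (hfj : qfac q (j+1) ≠ 0) (hfd : qfac q (d+1) ≠ 0) :
    lamE a q n (j+d+2) (j+1)
      = lamE a q n (j+d+1) (j+1)
        - (a⁻¹)^2 * ((q^((n:ℤ)+(d:ℤ)-1))⁻¹)^2 * lamE a q n (j+d+1) (j+1)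
        + (a⁻¹)^2 * ((q^((n:ℤ)+(d:ℤ)))⁻¹)^2 * lamE a q n (j+d+1) j := by
  unfold lamE
  rw [show j+d+2-(j+1) = d+1 by omega, show j+d+1-(j+1) = d by omega,
      show j+d+1-j = d+1 by omega]
  rw [show j+d+2 = (j+d+1)+1 by omega]
  rw [kap_i n (j+d+1) (j+1), kap_j n (j+d+1) j]
  rw [pascal q hq j d hfj hfd]
  rw [show (n:ℤ)+(((j+d+1)+1 : ℕ):ℤ)-((j+1:ℕ):ℤ)-2 = (n:ℤ)+(d:ℤ)-1 by push_cast; ring]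
  rw [show (n:ℤ)+((j+d+1 : ℕ):ℤ)-((j+1:ℕ):ℤ)-2 = ((n:ℤ)+(d:ℤ)-1)-1 by push_cast; ring]
  rw [show (n:ℤ)+((j+d+1 : ℕ):ℤ)-(j:ℤ)-2 = (n:ℤ)+(d:ℤ)-1 by push_cast; ring]
  rw [qbrAP_succ a q ((n:ℤ)+(d:ℤ)-1) d]
  rw [show 2*(n:ℤ)-(((j+d+1)+1 : ℕ):ℤ)-((j+1:ℕ):ℤ) = (2*(n:ℤ)-2*(j:ℤ)-(d:ℤ)-3) by push_cast; ring]
  rw [show 2*(n:ℤ)-((j+d+1 : ℕ):ℤ)-((j+1:ℕ):ℤ) = (2*(n:ℤ)-2*(j:ℤ)-(d:ℤ)-3)+1 by push_cast; ring]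
  rw [show 2*(n:ℤ)-((j+d+1 : ℕ):ℤ)-(j:ℤ) = (2*(n:ℤ)-2*(j:ℤ)-(d:ℤ)-3)+2 by push_cast; ring]
  rw [show kap n (j+d+1) j - (n:ℤ) + (j:ℤ) + 1 - (n:ℤ) - ((j+d+1:ℕ):ℤ) + 1
        = kap n (j+d+1) j + (1-2*(n:ℤ)-(d:ℤ)) by push_cast; ring]
  rw [show kap n (j+d+1) j - (n:ℤ) + (j:ℤ) + 1
        = kap n (j+d+1) j + ((j:ℤ)+1-(n:ℤ)) by ring]
  have h1 : a^(2*(n:ℤ)-2*(j:ℤ)-(d:ℤ)-3) * q^(kap n (j+d+1) j + (1-2*(n:ℤ)-(d:ℤ)))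
        * q^(j+1) * qbrA a q ((n:ℤ)+(d:ℤ)-1)
      = a^(2*(n:ℤ)-2*(j:ℤ)-(d:ℤ)-3+1) * q^(kap n (j+d+1) j + ((j:ℤ)+1-(n:ℤ)))
        - (a⁻¹)^2 * ((q^((n:ℤ)+(d:ℤ)-1))⁻¹)^2
          * (a^(2*(n:ℤ)-2*(j:ℤ)-(d:ℤ)-3+1) * q^(kap n (j+d+1) j + ((j:ℤ)+1-(n:ℤ)))) := by
    rw [qJ q j]
    unfold qbrA
    rw [mul_sub, flatA a q ha hq, flatAi a q ha hq, flat3 a q ha hq]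
    rw [show kap n (j+d+1) j + (1-2*(n:ℤ)-(d:ℤ)) + ((j:ℤ)+1) + ((n:ℤ)+(d:ℤ)-1)
          = kap n (j+d+1) j + ((j:ℤ)+1-(n:ℤ)) by ring]
    rw [show (-2 + (2*(n:ℤ)-2*(j:ℤ)-(d:ℤ)-3+1) : ℤ) = 2*(n:ℤ)-2*(j:ℤ)-(d:ℤ)-3+(-1) by ring]
    rw [show (-(2*((n:ℤ)+(d:ℤ)-1)) + (kap n (j+d+1) j + ((j:ℤ)+1-(n:ℤ))) : ℤ)
          = kap n (j+d+1) j + (1-2*(n:ℤ)-(d:ℤ)) + ((j:ℤ)+1) + -((n:ℤ)+(d:ℤ)-1) by ring]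
  have h2 : a^(2*(n:ℤ)-2*(j:ℤ)-(d:ℤ)-3) * q^(kap n (j+d+1) j + (1-2*(n:ℤ)-(d:ℤ)))
        * (q^(d+1))⁻¹
      = (a⁻¹)^2 * ((q^((n:ℤ)+(d:ℤ)))⁻¹)^2
          * (a^(2*(n:ℤ)-2*(j:ℤ)-(d:ℤ)-3+2) * q^(kap n (j+d+1) j)) := by
    rw [qJinv q d]
    rw [mul_assoc, ← zpow_add₀ hq, flat3 a q ha hq]
    rw [show (-2 + (2*(n:ℤ)-2*(j:ℤ)-(d:ℤ)-3+2) : ℤ) = 2*(n:ℤ)-2*(j:ℤ)-(d:ℤ)-3 by ring]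
    rw [show (-(2*((n:ℤ)+(d:ℤ))) + kap n (j+d+1) j : ℤ)
          = kap n (j+d+1) j + (1-2*(n:ℤ)-(d:ℤ)) + -((d:ℤ)+1) by ring]
  linear_combination (qbinom q (j+d+1) (j+1) * qbrAP a q ((n:ℤ)+(d:ℤ)-1-1) d) * h1
    + (qbinom q (j+d+1) j * (qbrA a q ((n:ℤ)+(d:ℤ)-1) * qbrAP a q ((n:ℤ)+(d:ℤ)-1-1) d)) * h2
lemma stepC (a q : ℂ) (ha : a ≠ 0) (hq : q ≠ 0) (n i : ℕ)
    (hf1 : qfac q (i+1) ≠ 0) (hf0 : qfac q i ≠ 0) :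
    lamE a q n (i+1) (i+1) = (a⁻¹)^2 * ((q^((n:ℤ)-1))⁻¹)^2 * lamE a q n i i := by
  unfold lamE
  rw [Nat.sub_self, Nat.sub_self, qbrAP_zero, qbrAP_zero,
      qbinom_self q (i+1) hf1, qbinom_self q i hf0]
  rw [kap_i n i (i+1), kap_j n i i]
  rw [mul_one, mul_one, mul_one, mul_one]
  rw [flat3 a q ha hq]
  rw [show 2*(n:ℤ) - ((i+1:ℕ):ℤ) - ((i+1:ℕ):ℤ) = -2 + (2*(n:ℤ)-(i:ℤ)-(i:ℤ)) by push_cast; ring]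
  rw [show kap n i i - (n:ℤ) + (i:ℤ) + 1 - (n:ℤ) - (i:ℤ) + 1
        = -(2*((n:ℤ)-1)) + kap n i i by ring]

lemma stepA (a q : ℂ) (ha : a ≠ 0) (hq : q ≠ 0) (n i : ℕ)
    (hf1 : qfac q (i+1) ≠ 0) (hf0 : qfac q i ≠ 0) :
    lamE a q n (i+1) 0
      = lamE a q n i 0 - (a⁻¹)^2 * ((q^((n:ℤ)+(i:ℤ)-1))⁻¹)^2 * lamE a q n i 0 := by
  unfold lamE
  rw [Nat.sub_zero, Nat.sub_zero, qbinom_zero q (i+1) hf1, qbinom_zero q i hf0]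
  rw [kap_i n i 0]
  rw [mul_one, mul_one]
  rw [show (n:ℤ) + ((i+1:ℕ):ℤ) - ((0:ℕ):ℤ) - 2 = (n:ℤ)+(i:ℤ)-1 by push_cast; ring]
  rw [show (n:ℤ) + (i:ℤ) - ((0:ℕ):ℤ) - 2 = ((n:ℤ)+(i:ℤ)-1)-1 by push_cast; ring]
  rw [qbrAP_succ a q ((n:ℤ)+(i:ℤ)-1) i]
  rw [show 2*(n:ℤ) - ((i+1:ℕ):ℤ) - ((0:ℕ):ℤ) = (2*(n:ℤ)-(i:ℤ)-((0:ℕ):ℤ)) + (-1) by push_cast; ring]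
  have h : a^((2*(n:ℤ)-(i:ℤ)-((0:ℕ):ℤ)) + (-1)) * q^(kap n i 0 - (n:ℤ) - (i:ℤ) + 1)
        * qbrA a q ((n:ℤ)+(i:ℤ)-1)
      = a^(2*(n:ℤ)-(i:ℤ)-((0:ℕ):ℤ)) * q^(kap n i 0)
        - (a⁻¹)^2 * ((q^((n:ℤ)+(i:ℤ)-1))⁻¹)^2
          * (a^(2*(n:ℤ)-(i:ℤ)-((0:ℕ):ℤ)) * q^(kap n i 0)) := by
    unfold qbrA
    rw [mul_sub, flatA2 a q ha hq, flatAi2 a q ha hq, flat3 a q ha hq]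
    rw [show (2*(n:ℤ)-(i:ℤ)-((0:ℕ):ℤ)) + (-1) + 1 = 2*(n:ℤ)-(i:ℤ)-((0:ℕ):ℤ) by ring]
    rw [show kap n i 0 - (n:ℤ) - (i:ℤ) + 1 + ((n:ℤ)+(i:ℤ)-1) = kap n i 0 by ring]
    rw [show (-2 + (2*(n:ℤ)-(i:ℤ)-((0:ℕ):ℤ)) : ℤ) = (2*(n:ℤ)-(i:ℤ)-((0:ℕ):ℤ)) + (-1) + (-1) by ring]
    rw [show (-(2*((n:ℤ)+(i:ℤ)-1)) + kap n i 0 : ℤ)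
          = kap n i 0 - (n:ℤ) - (i:ℤ) + 1 + -((n:ℤ)+(i:ℤ)-1) by ring]
  linear_combination (qbrAP a q ((n:ℤ)+(i:ℤ)-1-1) i) * h
theorem statement_1 (a q : ℂ) (ha : a ≠ 0) (hq : q ≠ 0) (n : ℕ)
    (hroot : ∀ k : ℕ, 1 ≤ k → k ≤ n → q ^ (2 * k) ≠ 1)
    (i : ℕ) (hi : i ≤ n) :
    (a : ℂ) ^ (2 * n) * q ^ (2 * n * (n - 1)) =
      ∑ j ∈ Finset.range (i + 1), lamE a q n i j := by
  have hfac : ∀ k : ℕ, k ≤ n → qfac q k ≠ 0 := fun k hk =>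
    qfac_ne q hq k (fun t h1 h2 => hroot t h1 (le_trans h2 hk))
  induction i with
  | zero =>
      rw [Finset.sum_range_one]
      unfold lamE
      rw [Nat.sub_self, qbrAP_zero, qbinom_zero q 0 (by rw [qfac_zero]; norm_num)]
      rw [mul_one, mul_one]
      rw [show 2*(n:ℤ) - ((0:ℕ):ℤ) - ((0:ℕ):ℤ) = ((2*n : ℕ):ℤ) by push_cast; ring]
      rw [← kap_00 n, zpow_natCast, zpow_natCast]
  | succ i ih =>
      have hi' : i ≤ n := by omega
      have ih' := ih hi'
      set G : ℕ → ℂ := fun j => (a⁻¹)^2 * ((q^((n:ℤ)+(i:ℤ)-(j:ℤ)-1))⁻¹)^2 * lamE a q n i j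
        with hG
      have hA : lamE a q n (i+1) 0 = lamE a q n i 0 - G 0 := by
        rw [hG]
        simp only []
        rw [show (n:ℤ)+(i:ℤ)-((0:ℕ):ℤ)-1 = (n:ℤ)+(i:ℤ)-1 by push_cast; ring]
        exact stepA a q ha hq n i (hfac (i+1) hi) (hfac i hi')
      have hC : lamE a q n (i+1) (i+1) = G i := by
        rw [hG]
        simp only []
        rw [show (n:ℤ)+(i:ℤ)-(i:ℤ)-1 = (n:ℤ)-1 by ring]
        exact stepC a q ha hq n i (hfac (i+1) hi) (hfac i hi')
      have hB : ∀ j ∈ Finset.range i,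
          lamE a q n (i+1) (j+1) = lamE a q n i (j+1) - G (j+1) + G j := by
        intro j hj
        rw [Finset.mem_range] at hj
        obtain ⟨d, hd⟩ : ∃ d, i = j + d + 1 := ⟨i - j - 1, by omega⟩
        rw [hG]
        simp only []
        rw [hd]
        rw [show (n:ℤ)+((j+d+1:ℕ):ℤ)-((j+1:ℕ):ℤ)-1 = (n:ℤ)+(d:ℤ)-1 by push_cast; ring]
        rw [show (n:ℤ)+((j+d+1:ℕ):ℤ)-(j:ℤ)-1 = (n:ℤ)+(d:ℤ) by push_cast; ring]
        rw [show j+d+1+1 = j+d+2 by omega]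
        exact stepB a q ha hq n j d (hfac (j+1) (by omega)) (hfac (d+1) (by omega))
      rw [Finset.sum_range_succ' _ (i+1), Finset.sum_range_succ, Finset.sum_congr rfl hB,
          hA, hC]
      have tel : ∑ j ∈ Finset.range i, (G (j+1) - G j) = G i - G 0 :=
        Finset.sum_range_sub G i
      have split : ∑ j ∈ Finset.range i, (lamE a q n i (j+1) - G (j+1) + G j)
          = (∑ j ∈ Finset.range i, lamE a q n i (j+1))
            - ∑ j ∈ Finset.range i, (G (j+1) - G j) := by
        rw [← Finset.sum_sub_distrib]
        exact Finset.sum_congr rfl (fun j _ => by ring)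
      rw [split, tel]
      rw [Finset.sum_range_succ' _ i] at ih'
      linear_combination ih'
end

section
/- Let a and q be nonzero complex numbers and let m, n, i be integers with 0 ≤ i ≤ n−1. Then {m}_i {n}_i {m+n−i−2; a}_{n−i} {n−1; a}_{n−i} = {m}_i {n}_i {m+n−i−1; a}_{n−i} {n−2; a}_{n−i} + {m}_{i+1} {n}_{i+1} {m+n−i−2; a}_{n−i−1} {n−2; a}_{n−i−1}. -/
open Finset

lemma key_stmt5 (a q : ℂ) (ha : a ≠ 0) (hq : q ≠ 0) (m n i : ℤ) :
    qbrA a q (m-1) * qbrA a q (n-1) =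
      qbrA a q (m+n-i-1) * qbrA a q (i-1) + qbr q (m-i) * qbr q (n-i) := by
  have e1 : a * a⁻¹ = 1 := mul_inv_cancel₀ ha
  have e4 : q ^ (i:ℤ) * q ^ (-i) = 1 := by
    rw [← zpow_add₀ hq]; simp
  have e5 : q * q⁻¹ = 1 := mul_inv_cancel₀ hq
  simp only [qbrA, qbr, sub_eq_add_neg, neg_add, neg_neg, zpow_add₀ hq, zpow_one, zpow_neg_one]
  linear_combination
    (q^m * q^(-n) + q^(-m) * q^n - a^2 * q^m * q^n * q⁻¹^2 - a⁻¹^2 * q^2 * q^(-m) * q^(-n)) * e4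
    - (q^m * q^(-n) + q^(-m) * q^n - q^m * q^n * (q^(-i))^2 - q^(-m) * q^(-n) * (q^i)^2) * e1
    - (q^m * q^(-n) + q^(-m) * q^n - q^m * q^n * (q^(-i))^2 - q^(-m) * q^(-n) * (q^i)^2) * (a * a⁻¹) * e5

lemma qbrAP_succ_last (a q : ℂ) (n : ℤ) (i : ℕ) :
    qbrAP a q n (i+1) = qbrAP a q n i * qbrA a q (n - i) := by
  simp [qbrAP, Finset.prod_range_succ]

lemma qbrAP_succ_first (a q : ℂ) (n : ℤ) (i : ℕ) :
    qbrAP a q n (i+1) = qbrA a q n * qbrAP a q (n-1) i := by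
  rw [qbrAP, Finset.prod_range_succ', mul_comm]
  simp only [Nat.cast_zero, sub_zero]
  congr 1
  rw [qbrAP]
  apply Finset.prod_congr rfl; intro k _; congr 1; push_cast; ring

lemma qbrP_succ (q : ℂ) (n : ℤ) (i : ℕ) :
    qbrP q n (i+1) = qbrP q n i * qbr q (n - i) := by
  simp [qbrP, Finset.prod_range_succ]

theorem statement_5 (a q : ℂ) (ha : a ≠ 0) (hq : q ≠ 0) (m : ℤ) (n i : ℕ)
    (hi : (i : ℤ) ≤ (n : ℤ) - 1) :
    qbrP q m i * qbrP q n i * qbrAP a q (m + (n : ℤ) - (i : ℤ) - 2) (n - i) *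
        qbrAP a q ((n : ℤ) - 1) (n - i) =
      qbrP q m i * qbrP q n i * qbrAP a q (m + (n : ℤ) - (i : ℤ) - 1) (n - i) *
          qbrAP a q ((n : ℤ) - 2) (n - i) +
        qbrP q m (i + 1) * qbrP q n (i + 1) *
          qbrAP a q (m + (n : ℤ) - (i : ℤ) - 2) (n - i - 1) *
          qbrAP a q ((n : ℤ) - 2) (n - i - 1) := by
  obtain ⟨j, hj⟩ : ∃ j, n - i = j + 1 := ⟨n - i - 1, by omega⟩
  have hj' : (j : ℤ) = (n : ℤ) - i - 1 := by omega
  rw [hj]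
  simp only [Nat.add_sub_cancel]
  rw [qbrAP_succ_last a q (m + (n:ℤ) - i - 2) j,
    qbrAP_succ_first a q ((n:ℤ) - 1) j,
    qbrAP_succ_first a q (m + (n:ℤ) - i - 1) j,
    qbrAP_succ_last a q ((n:ℤ) - 2) j,
    qbrP_succ q m i, qbrP_succ q n i]
  have h2 : m + (n:ℤ) - i - 2 - j = m - 1 := by omega
  have h3 : m + (n:ℤ) - i - 1 - 1 = m + (n:ℤ) - i - 2 := by ring
  have h4 : (n:ℤ) - 2 - j = (i:ℤ) - 1 := by omega
  have h5 : (n:ℤ) - 1 - 1 = (n:ℤ) - 2 := by ring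
  rw [h2, h3, h4, h5]
  linear_combination (qbrP q m i * qbrP q n i * qbrAP a q (m + (n:ℤ) - i - 2) j *
    qbrAP a q ((n:ℤ) - 2) j) * key_stmt5 a q ha hq m n i
end

section
/- Let a and q be nonzero complex numbers and let i, j, k ≥ 0 be integers with j + k ≤ i, and assume q^{2l} ≠ 1 for 1 ≤ l ≤ i. With β^{l}_{r,s:m,n} = ({m−s}_l {n−s}_l / ({m}_r {n}_r)) · {s}_{r−l} · [r choose l]_q · {m+n−s−l−1; a}_{r−l}, one has β^{j}_{i−k, i−j : i, i} = {j}! {k}! {i−1; a}_{i−j−k} / ({i}_j {i}_k {i−j−k}!), and in particular β^{j}_{i−k, i−j : i, i} = β^{k}_{i−j, i−k : i, i}. -/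
open Finset

/-- The coefficient `β^{l}_{r,s:m,n} = ({m−s}_l {n−s}_l / ({m}_r {n}_r)) · {s}_{r−l} ·
[r choose l]_q · {m+n−s−l−1; a}_{r−l}`. -/
noncomputable def qbeta (a q : ℂ) (m n : ℤ) (r s l : ℕ) : ℂ :=
  (qbrP q (m - (s : ℤ)) l * qbrP q (n - (s : ℤ)) l / (qbrP q m r * qbrP q n r)) *
    qbrP q (s : ℤ) (r - l) * qbinom q r l *
    qbrAP a q (m + n - (s : ℤ) - (l : ℤ) - 1) (r - l)

lemma qbrP_add' (q : ℂ) (m : ℤ) (r s : ℕ) :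
    qbrP q m (r + s) = qbrP q m r * qbrP q (m - r) s := by
  unfold qbrP
  rw [Finset.prod_range_add]
  congr 1
  refine Finset.prod_congr rfl fun x _ => ?_
  congr 1
  push_cast
  ring

lemma qfac_split' (q : ℂ) {n r : ℕ} (h : r ≤ n) :
    qfac q n = qbrP q n r * qfac q (n - r) := by
  have h1 : n = r + (n - r) := by omega
  have h2 : ((n : ℤ) - r) = ((n - r : ℕ) : ℤ) := by omega
  unfold qfac
  conv_lhs => rw [show qbrP q (n:ℤ) n = qbrP q (n:ℤ) (r + (n-r)) by rw [← h1]]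
  rw [qbrP_add', h2]

lemma qbr_ne' (q : ℂ) (hq : q ≠ 0) {i : ℕ} (hroot : ∀ l : ℕ, 1 ≤ l → l ≤ i → q ^ (2 * l) ≠ 1)
    {m : ℕ} (h1 : 1 ≤ m) (h2 : m ≤ i) : qbr q (m : ℤ) ≠ 0 := by
  unfold qbr
  intro h
  apply hroot m h1 h2
  have h3 : q ^ ((m:ℤ)) = q ^ (-(m:ℤ)) := sub_eq_zero.mp h
  calc q ^ (2 * m) = q ^ ((m:ℤ)) * q ^ ((m:ℤ)) := by
        rw [two_mul, pow_add, zpow_natCast]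
    _ = q ^ ((m:ℤ)) * q ^ (-(m:ℤ)) := by rw [← h3]
    _ = 1 := by rw [← zpow_add₀ hq]; simp

lemma qfac_ne' (q : ℂ) (hq : q ≠ 0) {i : ℕ} (hroot : ∀ l : ℕ, 1 ≤ l → l ≤ i → q ^ (2 * l) ≠ 1) :
    ∀ m : ℕ, m ≤ i → qfac q m ≠ 0 := by
  intro m
  induction m with
  | zero => intro _; simp [qfac, qbrP]
  | succ n ih =>
    intro hle
    have h := qfac_split' q (show 1 ≤ n + 1 by omega)
    rw [show n + 1 - 1 = n from rfl] at h
    rw [h]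
    have hb : qbrP q ((n+1 : ℕ) : ℤ) 1 = qbr q ((n+1 : ℕ) : ℤ) := by
      simp [qbrP]
    rw [hb]
    exact mul_ne_zero (qbr_ne' q hq hroot (by omega) hle) (ih (by omega))

lemma qbeta_main (a q : ℂ) (hq : q ≠ 0) (i j k : ℕ) (hjk : j + k ≤ i)
    (hroot : ∀ l : ℕ, 1 ≤ l → l ≤ i → q ^ (2 * l) ≠ 1) :
    qbeta a q i i (i - k) (i - j) j =
        qfac q j * qfac q k * qbrAP a q ((i : ℤ) - 1) (i - j - k) /
          (qbrP q i j * qbrP q i k * qfac q (i - j - k)) := by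
  have Fne := qfac_ne' q hq hroot
  have hFi : qfac q i ≠ 0 := Fne i le_rfl
  have hFj : qfac q j ≠ 0 := Fne j (by omega)
  have hFk : qfac q k ≠ 0 := Fne k (by omega)
  have hFij : qfac q (i - j) ≠ 0 := Fne _ (by omega)
  have hFik : qfac q (i - k) ≠ 0 := Fne _ (by omega)
  have hFd : qfac q (i - j - k) ≠ 0 := Fne _ (by omega)
  have r1 : qfac q i = qbrP q i (i - k) * qfac q k := by
    have := qfac_split' q (show i - k ≤ i by omega)
    rwa [show i - (i - k) = k by omega] at this
  have r2 : qfac q i = qbrP q i j * qfac q (i - j) := qfac_split' q (by omega)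
  have r3 : qfac q i = qbrP q i k * qfac q (i - k) := qfac_split' q (by omega)
  have r4 : qfac q (i - j) = qbrP q ((i - j : ℕ) : ℤ) (i - j - k) * qfac q k := by
    have := qfac_split' q (show i - j - k ≤ i - j by omega)
    rwa [show i - j - (i - j - k) = k by omega] at this
  have b1 : qbrP q i (i - k) = qfac q i / qfac q k := (eq_div_iff hFk).mpr r1.symm
  have b2 : qbrP q i j = qfac q i / qfac q (i - j) := (eq_div_iff hFij).mpr r2.symm
  have b3 : qbrP q i k = qfac q i / qfac q (i - k) := (eq_div_iff hFik).mpr r3.symm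
  have b4 : qbrP q ((i - j : ℕ) : ℤ) (i - j - k) = qfac q (i - j) / qfac q k :=
    (eq_div_iff hFk).mpr r4.symm
  have e1 : ((i : ℤ) - ((i - j : ℕ) : ℤ)) = ((j : ℕ) : ℤ) := by omega
  have e2 : (i - k) - j = i - j - k := by omega
  have e3 : (i : ℤ) + (i : ℤ) - ((i - j : ℕ) : ℤ) - (j : ℤ) - 1 = (i : ℤ) - 1 := by omega
  unfold qbeta qbinom
  rw [e1, e2, e3, show qbrP q ((j : ℕ) : ℤ) j = qfac q j from rfl, b1, b2, b3, b4]
  field_simp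

theorem statement_8 (a q : ℂ) (ha : a ≠ 0) (hq : q ≠ 0) (i j k : ℕ) (hjk : j + k ≤ i)
    (hroot : ∀ l : ℕ, 1 ≤ l → l ≤ i → q ^ (2 * l) ≠ 1) :
    qbeta a q i i (i - k) (i - j) j =
        qfac q j * qfac q k * qbrAP a q ((i : ℤ) - 1) (i - j - k) /
          (qbrP q i j * qbrP q i k * qfac q (i - j - k)) ∧
      qbeta a q i i (i - k) (i - j) j = qbeta a q i i (i - j) (i - k) k := by
  have h1 := qbeta_main a q hq i j k hjk hroot
  have h2 := qbeta_main a q hq i k j (by omega) hroot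
  refine ⟨h1, ?_⟩
  rw [h1, h2, show i - k - j = i - j - k by omega]
  ring
end
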